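/- Let v_1, …, v_m be unit vectors in ℂ^d, let Π_i = v_i v_i*, and let F = max_{i≠j} |⟨v_i, v_j⟩|. For every k with 1 ≤ k ≤ m, the success probability of the sequential measurement on input v_k satisfies ⟨v_k, (I−Π_1)⋯(I−Π_{k−1}) Π_k (I−Π_{k−1})⋯(I−Π_1) v_k⟩ ≥ 1 − 4(m−1)F². -/

import Mathlib

open Matrix ComplexOrder

private lemma vecMulVec_mulVec' {d : ℕ} (a b x : Fin d → ℂ) :
    vecMulVec a b *ᵥ x = (b ⬝ᵥ x) • a := by
  ext i
  simp only [vecMulVec, mulVec, dotProduct, Pi.smul_apply, smul_eq_mul, Finset.sum_mul, of_apply]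
  exact Finset.sum_congr rfl fun j _ => by ring

private lemma vecMulVec_conjT {d : ℕ} (a : Fin d → ℂ) :
    (vecMulVec a (star a))ᴴ = vecMulVec a (star a) := by
  ext i j
  simp [vecMulVec, mul_comm]

noncomputable def qstep {d : ℕ} (x w : EuclideanSpace ℂ (Fin d)) : EuclideanSpace ℂ (Fin d) :=
  x - (inner ℂ w x : ℂ) • w

private lemma inner_qstep_left {d : ℕ} (e x w : EuclideanSpace ℂ (Fin d)) :
    (inner ℂ e (qstep x w) : ℂ) = inner ℂ e x - (inner ℂ w x : ℂ) * (inner ℂ e w : ℂ) := by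
  simp [qstep, inner_sub_right, inner_smul_right]

private lemma norm_qstep {d : ℕ} (x w : EuclideanSpace ℂ (Fin d)) (hw : ‖w‖ = 1) :
    ‖qstep x w‖ ^ 2 = ‖x‖ ^ 2 - ‖(inner ℂ w x : ℂ)‖ ^ 2 := by
  have h := @norm_sub_sq ℂ _ _ _ _ x ((inner ℂ w x : ℂ) • w)
  rw [qstep, h, inner_smul_right, ← inner_conj_symm x w]
  rw [norm_smul, hw]
  have : RCLike.re ((inner ℂ w x : ℂ) * (starRingEnd ℂ) (inner ℂ w x : ℂ)) = ‖(inner ℂ w x : ℂ)‖ ^ 2 := by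
    rw [RCLike.mul_conj]
    exact_mod_cast rfl
  rw [this]
  simp
  ring
lemma qfold_aux {d : ℕ} (e : EuclideanSpace ℂ (Fin d)) (F : ℝ) (hF0 : 0 ≤ F)
    (l : List (EuclideanSpace ℂ (Fin d))) :
    ∀ (x : EuclideanSpace ℂ (Fin d)),
      (∀ w ∈ l, ‖w‖ = 1) → (∀ w ∈ l, ‖(inner ℂ e w : ℂ)‖ ≤ F) →
      ∃ S T : ℝ, 0 ≤ S ∧ 0 ≤ T ∧
        ‖l.foldl qstep x‖ ^ 2 + T = ‖x‖ ^ 2 ∧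
        ‖(inner ℂ e (l.foldl qstep x) : ℂ) - inner ℂ e x‖ ≤ F * S ∧
        S ^ 2 ≤ l.length * T := by
  induction l with
  | nil => intro x _ _; exact ⟨0, 0, le_rfl, le_rfl, by simp, by simp, by simp⟩
  | cons w t ih =>
    intro x hunit hov
    obtain ⟨S, T, hS, hT, hnorm, hinner, hsq⟩ :=
      ih (qstep x w) (fun u hu => hunit u (List.mem_cons_of_mem _ hu))
        (fun u hu => hov u (List.mem_cons_of_mem _ hu))
    set c : ℝ := ‖(inner ℂ w x : ℂ)‖ with hc
    have hc0 : 0 ≤ c := norm_nonneg _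
    have hwu : ‖w‖ = 1 := hunit w List.mem_cons_self
    have hwF : ‖(inner ℂ e w : ℂ)‖ ≤ F := hov w List.mem_cons_self
    refine ⟨S + c, T + c ^ 2, by positivity, by positivity, ?_, ?_, ?_⟩
    · rw [List.foldl_cons] at *
      have := norm_qstep x w hwu
      linarith
    · rw [List.foldl_cons] at *
      have tri : ‖(inner ℂ e (t.foldl qstep (qstep x w)) : ℂ) - inner ℂ e x‖ ≤
          ‖(inner ℂ e (t.foldl qstep (qstep x w)) : ℂ) - inner ℂ e (qstep x w)‖ +
          ‖(inner ℂ e (qstep x w) : ℂ) - inner ℂ e x‖ := norm_sub_le_norm_sub_add_norm_sub _ _ _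
      have h2 : ‖(inner ℂ e (qstep x w) : ℂ) - inner ℂ e x‖ = c * ‖(inner ℂ e w : ℂ)‖ := by
        rw [inner_qstep_left]
        rw [show (inner ℂ e x : ℂ) - (inner ℂ w x : ℂ) * inner ℂ e w - inner ℂ e x
              = -((inner ℂ w x : ℂ) * inner ℂ e w) by ring]
        rw [norm_neg, norm_mul]
      have h3 : c * ‖(inner ℂ e w : ℂ)‖ ≤ c * F := by
        exact mul_le_mul_of_nonneg_left hwF hc0
      nlinarith [hinner]
    · rw [List.length_cons]
      push_cast
      rcases eq_or_lt_of_le hT with hT0 | hT0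
      · have hS0 : S = 0 := by nlinarith [sq_nonneg S]
        subst hS0
        rw [← hT0]
        nlinarith [sq_nonneg c, Nat.cast_nonneg (α := ℝ) t.length]
      · nlinarith [sq_nonneg (S * c - T), mul_le_mul_of_nonneg_right hsq (sq_nonneg c), hT0,
          mul_pos hT0 hT0]

lemma real_alg (F S T A n : ℝ) (hF0 : 0 ≤ F) (hS : 0 ≤ S) (hT : 0 ≤ T) (hA : 0 ≤ A)
    (hn : 0 ≤ n) (h1 : 1 - F * S ≤ A) (h2 : A ^ 2 ≤ 1 - T) (h3 : S ^ 2 ≤ n * T) :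
    1 - 4 * n * F ^ 2 ≤ A ^ 2 := by
  rcases le_or_gt (F * S) 1 with h | h
  · have hA1 : (1 - F * S) ^ 2 ≤ A ^ 2 := by nlinarith
    have hT2 : T ≤ 2 * (F * S) := by nlinarith
    rcases eq_or_lt_of_le hS with hS0 | hS0
    · have : (1:ℝ) ≤ A := by nlinarith
      nlinarith [mul_nonneg hn (sq_nonneg F)]
    · have hS2 : S ^ 2 ≤ 2 * n * F * S := by nlinarith
      have hSle : S ≤ 2 * n * F := by nlinarith [mul_pos hS0 hS0]
      have : F * S ≤ 2 * n * F ^ 2 := by nlinarith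
      nlinarith [sq_nonneg (F * S)]
  · have hT1 : T ≤ 1 := by nlinarith [sq_nonneg A]
    have : 1 ≤ n * F ^ 2 := by nlinarith [mul_le_mul_of_nonneg_left hT1 (mul_nonneg hn (sq_nonneg F)), sq_nonneg (F*S)]
    nlinarith [sq_nonneg A]

lemma qfold_main {d : ℕ} (e : EuclideanSpace ℂ (Fin d)) (he : ‖e‖ = 1) (F : ℝ) (hF0 : 0 ≤ F)
    (l : List (EuclideanSpace ℂ (Fin d)))
    (hunit : ∀ w ∈ l, ‖w‖ = 1) (hov : ∀ w ∈ l, ‖(inner ℂ e w : ℂ)‖ ≤ F) :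
    1 - 4 * (l.length : ℝ) * F ^ 2 ≤ ‖(inner ℂ e (l.foldl qstep e) : ℂ)‖ ^ 2 := by
  obtain ⟨S, T, hS, hT, hnorm, hinner, hsq⟩ := qfold_aux e F hF0 l e hunit hov
  set u := l.foldl qstep e with hu
  set a : ℂ := inner ℂ e u with ha
  have hee : (inner ℂ e e : ℂ) = 1 := by
    rw [inner_self_eq_norm_sq_to_K, he]; norm_num
  rw [hee] at hinner
  have hre : 1 - F * S ≤ a.re := by
    have := Complex.abs_re_le_norm (a - 1)
    have h2 : (a - 1).re = a.re - 1 := by simp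
    rw [h2] at this
    have := abs_le.mp (le_trans this hinner) |>.1
    linarith
  have hreA : a.re ≤ ‖a‖ := by
    exact Complex.re_le_norm a
  have hAu : ‖a‖ ≤ ‖u‖ := by
    have := norm_inner_le_norm (𝕜 := ℂ) e u
    rwa [he, one_mul] at this
  have hA2 : ‖a‖ ^ 2 ≤ 1 - T := by
    have h1 : ‖a‖ ^ 2 ≤ ‖u‖ ^ 2 := by nlinarith [norm_nonneg a, norm_nonneg u]
    rw [he] at hnorm; nlinarith
  exact real_alg F S T ‖a‖ (l.length : ℝ) hF0 hS hT (norm_nonneg a)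
    (Nat.cast_nonneg _) (le_trans hre hreA) hA2 hsq


private lemma prod_rev_mulVec {d : ℕ} (l : List (Fin d → ℂ)) (x : Fin d → ℂ) :
    ((l.reverse.map (fun w => (1 : Matrix (Fin d) (Fin d) ℂ) - vecMulVec w (star w))).prod) *ᵥ x
      = l.foldl (fun u w => u - (star w ⬝ᵥ u) • w) x := by
  induction l generalizing x with
  | nil => simp [Matrix.one_mulVec]
  | cons w t ih =>
    rw [List.reverse_cons, List.map_append, List.prod_append]
    rw [List.map_singleton, List.prod_singleton, ← Matrix.mulVec_mulVec]
    rw [Matrix.sub_mulVec, Matrix.one_mulVec, vecMulVec_mulVec']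
    rw [List.foldl_cons, ih]

def toE {d : ℕ} (x : Fin d → ℂ) : EuclideanSpace ℂ (Fin d) := WithLp.toLp 2 x

private lemma inner_eq_dot {d : ℕ} (x y : Fin d → ℂ) :
    (inner (𝕜 := ℂ) (toE x) (toE y) : ℂ) = star x ⬝ᵥ y := by
  rw [EuclideanSpace.inner_eq_star_dotProduct, dotProduct_comm]
  rfl

private lemma foldl_qstep_eq {d : ℕ} (l : List (Fin d → ℂ)) (x : Fin d → ℂ) :
    toE (l.foldl (fun u w => u - (star w ⬝ᵥ u) • w) x)
      = (l.map toE).foldl qstep (toE x) := by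
  induction l generalizing x with
  | nil => rfl
  | cons w t ih =>
    rw [List.map_cons, List.foldl_cons, List.foldl_cons]
    have hq : qstep (toE x) (toE w) = toE (x - (star w ⬝ᵥ x) • w) := by
      rw [qstep, inner_eq_dot]; rfl
    rw [hq, ← ih]

/-- Quantum-union-bound guarantee for the sequential measurement algorithm: for unit
vectors `v₁, …, vₘ` in `ℂ^d` with pairwise overlaps at most `F`, the probability
`⟨v_k, (I−Π₁)⋯(I−Π_{k−1}) Π_k (I−Π_{k−1})⋯(I−Π₁) v_k⟩` of the correct outcome sequence
on input `v_k` is at least `1 − 4(m−1)F²`. -/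
theorem sequential_measurement_success_lower_bound {d m : ℕ} (v : Fin m → (Fin d → ℂ))
    (hv : ∀ i, star (v i) ⬝ᵥ v i = 1)
    (F : ℝ) (hF0 : 0 ≤ F)
    (hF : ∀ i j, i ≠ j → ‖star (v i) ⬝ᵥ v j‖ ≤ F)
    (k : Fin m) :
    letI Pi : Fin m → Matrix (Fin d) (Fin d) ℂ := fun i => vecMulVec (v i) (star (v i))
    letI L : Matrix (Fin d) (Fin d) ℂ :=
      (((List.finRange m).filter (fun i => i < k)).map (fun i => 1 - Pi i)).prod
    letI R : Matrix (Fin d) (Fin d) ℂ :=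
      ((((List.finRange m).filter (fun i => i < k)).reverse).map (fun i => 1 - Pi i)).prod
    ((1 - 4 * ((m : ℝ) - 1) * F ^ 2 : ℝ) : ℂ) ≤ star (v k) ⬝ᵥ ((L * Pi k * R) *ᵥ v k) := by
  dsimp only
  set f : (Fin d → ℂ) → Matrix (Fin d) (Fin d) ℂ := fun w => 1 - vecMulVec w (star w) with hf
  set l0 : List (Fin m) := (List.finRange m).filter (fun i => i < k) with hl0
  set lv : List (Fin d → ℂ) := l0.map v with hlv
  have hLmap : l0.map (fun i => 1 - vecMulVec (v i) (star (v i))) = lv.map f := by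
    rw [hlv, List.map_map]; rfl
  have hRmap : l0.reverse.map (fun i => 1 - vecMulVec (v i) (star (v i))) = lv.reverse.map f := by
    rw [hlv, List.map_reverse, List.map_reverse, List.map_map]; rfl
  rw [hLmap, hRmap]

  set L' : Matrix (Fin d) (Fin d) ℂ := (lv.map f).prod with hL'
  set R' : Matrix (Fin d) (Fin d) ℂ := (lv.reverse.map f).prod with hR'
  set a : ℂ := star (v k) ⬝ᵥ (R' *ᵥ v k) with ha
  have hfstar : ∀ w : Fin d → ℂ, (f w)ᴴ = f w := by
    intro w
    rw [hf]
    simp only []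
    rw [conjTranspose_sub, conjTranspose_one, vecMulVec_conjT]
  have hRH : R'ᴴ = L' := by
    rw [hR', conjTranspose_list_prod, List.map_map]
    have : (lv.reverse.map (conjTranspose ∘ f)) = lv.reverse.map f :=
      List.map_congr_left fun w _ => hfstar w
    rw [this, ← List.map_reverse, List.reverse_reverse]
  have hstar_a : star a = star (v k) ⬝ᵥ (L' *ᵥ v k) := by
    rw [ha, star_dotProduct, star_star, star_mulVec, hRH, ← dotProduct_mulVec]
  have hRHS : star (v k) ⬝ᵥ ((L' * vecMulVec (v k) (star (v k)) * R') *ᵥ v k)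
      = a * star a := by
    rw [← Matrix.mulVec_mulVec, ← Matrix.mulVec_mulVec, vecMulVec_mulVec', ← ha,
      mulVec_smul, dotProduct_smul, smul_eq_mul, hstar_a]
  rw [hRHS]
  have hmc : a * star a = ((‖a‖ ^ 2 : ℝ) : ℂ) := by
    rw [Complex.star_def, Complex.mul_conj, Complex.normSq_eq_norm_sq]
  rw [hmc, Complex.real_le_real]
  have hav : a = inner ℂ (toE (v k)) ((lv.map toE).foldl qstep (toE (v k))) := by
    rw [ha, hR', prod_rev_mulVec, ← foldl_qstep_eq, inner_eq_dot]
  have hn1 : ∀ i : Fin m, ‖toE (v i)‖ = 1 := by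
    intro i
    have h1 : (inner ℂ (toE (v i)) (toE (v i)) : ℂ) = 1 := by rw [inner_eq_dot]; exact hv i
    have h2 : ‖toE (v i)‖ ^ 2 = 1 := by
      rw [← inner_self_eq_norm_sq (𝕜 := ℂ)]
      simpa using congrArg Complex.re h1
    rw [← Real.sqrt_sq (norm_nonneg _), h2, Real.sqrt_one]
  have hmem : ∀ w ∈ lv.map toE, ∃ i : Fin m, i < k ∧ w = toE (v i) := by
    intro w hw
    obtain ⟨u, hu, rfl⟩ := List.mem_map.mp hw
    rw [hlv] at hu
    obtain ⟨i, hi, rfl⟩ := List.mem_map.mp hu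
    exact ⟨i, by simpa using (List.mem_filter.mp hi).2, rfl⟩
  have hunit : ∀ w ∈ lv.map toE, ‖w‖ = 1 := by
    intro w hw
    obtain ⟨i, _, rfl⟩ := hmem w hw
    exact hn1 i
  have hov : ∀ w ∈ lv.map toE, ‖(inner ℂ (toE (v k)) w : ℂ)‖ ≤ F := by
    intro w hw
    obtain ⟨i, hik, rfl⟩ := hmem w hw
    rw [inner_eq_dot]
    exact hF k i (ne_of_gt hik)
  have hmain : 1 - 4 * (((lv.map toE).length : ℕ) : ℝ) * F ^ 2 ≤ ‖a‖ ^ 2 := by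
    rw [hav]
    exact qfold_main (toE (v k)) (hn1 k) F hF0 (lv.map toE) hunit hov
  have hlen : (((lv.map toE).length : ℕ) : ℝ) ≤ (m : ℝ) - 1 := by
    have h1 : l0.length < m := by
      have h2 : (List.filter (fun i => decide (i < k)) (List.finRange m)).length
          < (List.finRange m).length :=
        List.length_filter_lt_length_iff_exists.mpr ⟨k, List.mem_finRange k, by simp⟩
      simpa [hl0, List.length_finRange] using h2
    have h3 : ((lv.map toE).length : ℕ) = l0.length := by
      rw [List.length_map, hlv, List.length_map]
    rw [h3]
    have h4 : (l0.length + 1 : ℕ) ≤ m := h1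
    have h5 : ((l0.length : ℝ) + 1) ≤ (m : ℝ) := by exact_mod_cast h4
    linarith
  nlinarith [sq_nonneg F, hlen, hmain, mul_nonneg (Nat.cast_nonneg (α := ℝ) ((lv.map toE).length)) (sq_nonneg F)]
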